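/- Let K be a number field with ring of integers R, let m ≥ 1, and let J be an m×m matrix over K. Then for every P ∈ O(J,K), the subgroups O(J,R) and P⁻¹·O(J,R)·P of GL(Fin m, K) are commensurable. -/

import Mathlib

open Matrix NumberField

variable {K : Type*} [Field K] [NumberField K] {m : ℕ}

/-- `O(J,K)`: the subgroup of `GL (Fin m) K` of elements `g` with `gᵀ · J · g = J`. -/
def OJK (J : Matrix (Fin m) (Fin m) K) : Subgroup (GL (Fin m) K) where
  carrier := {g | (↑g : Matrix (Fin m) (Fin m) K)ᵀ * J * (↑g : Matrix (Fin m) (Fin m) K) = J}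
  one_mem' := by simp
  mul_mem' := by
    intro a b ha hb
    simp only [Set.mem_setOf_eq, Units.val_mul, transpose_mul] at *
    calc (↑b : Matrix (Fin m) (Fin m) K)ᵀ * (↑a : Matrix (Fin m) (Fin m) K)ᵀ * J *
          ((↑a : Matrix (Fin m) (Fin m) K) * (↑b : Matrix (Fin m) (Fin m) K))
        = (↑b : Matrix (Fin m) (Fin m) K)ᵀ *
            (((↑a : Matrix (Fin m) (Fin m) K)ᵀ * J * (↑a : Matrix (Fin m) (Fin m) K)) *
              (↑b : Matrix (Fin m) (Fin m) K)) := by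
          simp only [mul_assoc]
      _ = J := by rw [ha, ← mul_assoc]; exact hb
  inv_mem' := by
    intro a ha
    simp only [Set.mem_setOf_eq] at *
    conv_lhs => rw [← ha]
    calc (↑a⁻¹ : Matrix (Fin m) (Fin m) K)ᵀ *
          ((↑a : Matrix (Fin m) (Fin m) K)ᵀ * J * (↑a : Matrix (Fin m) (Fin m) K)) *
            (↑a⁻¹ : Matrix (Fin m) (Fin m) K)
        = ((↑a : Matrix (Fin m) (Fin m) K) * (↑a⁻¹ : Matrix (Fin m) (Fin m) K))ᵀ *
            (J * ((↑a : Matrix (Fin m) (Fin m) K) * (↑a⁻¹ : Matrix (Fin m) (Fin m) K))) := by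
          rw [transpose_mul]; simp only [mul_assoc]
      _ = J := by rw [Units.mul_inv]; simp

/-- `O(J,R)`: the subgroup of `O(J,K)` of elements `g` all of whose entries, and all of
whose inverse's entries, are integral (lie in the image of the ring of integers `𝓞 K`). -/
def OJR (J : Matrix (Fin m) (Fin m) K) : Subgroup (GL (Fin m) K) where
  carrier := {g | g ∈ OJK J ∧
    (∀ i j, (↑g : Matrix (Fin m) (Fin m) K) i j ∈ (algebraMap (𝓞 K) K).range) ∧
    (∀ i j, (↑g⁻¹ : Matrix (Fin m) (Fin m) K) i j ∈ (algebraMap (𝓞 K) K).range)}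
  one_mem' := by
    have h : ∀ i j : Fin m,
        (1 : Matrix (Fin m) (Fin m) K) i j ∈ (algebraMap (𝓞 K) K).range := by
      intro i j
      rw [Matrix.one_apply]
      split
      · exact one_mem _
      · exact zero_mem _
    exact ⟨(OJK J).one_mem,
      fun i j => by simpa only [Units.val_one] using h i j,
      fun i j => by simpa only [inv_one, Units.val_one] using h i j⟩
  mul_mem' := by
    rintro a b ⟨haO, haE, haE'⟩ ⟨hbO, hbE, hbE'⟩
    refine ⟨(OJK J).mul_mem haO hbO, ?_, ?_⟩ <;> intro i j
    · rw [Units.val_mul, Matrix.mul_apply]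
      exact sum_mem fun k _ => mul_mem (haE i k) (hbE k j)
    · rw [_root_.mul_inv_rev, Units.val_mul, Matrix.mul_apply]
      exact sum_mem fun k _ => mul_mem (hbE' i k) (haE' k j)
  inv_mem' := by
    rintro a ⟨haO, haE, haE'⟩
    exact ⟨(OJK J).inv_mem haO, haE', by simp only [inv_inv]; exact haE⟩

open scoped Pointwise

omit [NumberField K] in
lemma aux_entries_mul {S : Subring K} {A B : Matrix (Fin m) (Fin m) K}
    (hA : ∀ i j, A i j ∈ S) (hB : ∀ i j, B i j ∈ S) : ∀ i j, (A * B) i j ∈ S := by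
  intro i j
  rw [Matrix.mul_apply]
  exact sum_mem fun k _ => mul_mem (hA i k) (hB k j)

omit [NumberField K] in
lemma aux_one_mem {S : Subring K} : ∀ i j, (1 : Matrix (Fin m) (Fin m) K) i j ∈ S := by
  intro i j
  rw [Matrix.one_apply]
  split
  · exact one_mem _
  · exact zero_mem _

lemma aux_mem_map_conj {G : Type*} [Group G] (H : Subgroup G) (Q x : G) :
    x ∈ H.map (MulAut.conj Q).toMonoidHom ↔ Q⁻¹ * x * Q ∈ H := by
  constructor
  · rintro ⟨y, hy, rfl⟩
    simpa [MulAut.conj_apply, mul_assoc] using hy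
  · intro h
    exact ⟨Q⁻¹ * x * Q, h, by simp [MulAut.conj_apply]; group⟩

lemma aux_map_eq_smul {G : Type*} [Group G] (H : Subgroup G) (R : G) :
    H.map (MulAut.conj R).toMonoidHom = (ConjAct.toConjAct R) • H := by
  ext x
  rw [aux_mem_map_conj, Subgroup.mem_pointwise_smul_iff_inv_smul_mem]
  simp [ConjAct.smul_def, mul_assoc]

omit [NumberField K] in
lemma aux_conj_int {S : Subring K} {c : K}
    {Q a b : GL (Fin m) K} {E : Matrix (Fin m) (Fin m) K}
    (hA : ∀ i j, (c • (↑Q⁻¹ : Matrix (Fin m) (Fin m) K)) i j ∈ S)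
    (hB : ∀ i j, (c • (↑Q : Matrix (Fin m) (Fin m) K)) i j ∈ S)
    (hainv : ∀ i j, (↑a⁻¹ : Matrix (Fin m) (Fin m) K) i j ∈ S)
    (hEmem : ∀ i j, E i j ∈ S)
    (hE : (↑b : Matrix (Fin m) (Fin m) K) = ↑a + (c * c) • E) :
    ∀ i j, (↑(Q⁻¹ * a⁻¹ * b * Q) : Matrix (Fin m) (Fin m) K) i j ∈ S := by
  have hval : (↑(Q⁻¹ * a⁻¹ * b * Q) : Matrix (Fin m) (Fin m) K)
      = 1 + (c • (↑Q⁻¹ : Matrix (Fin m) (Fin m) K)) *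
          ((↑a⁻¹ : Matrix (Fin m) (Fin m) K) * (E * (c • (↑Q : Matrix (Fin m) (Fin m) K)))) := by
    have h1 : (↑(Q⁻¹ * a⁻¹ * b * Q) : Matrix (Fin m) (Fin m) K)
        = (↑Q⁻¹ : Matrix (Fin m) (Fin m) K) * (↑a⁻¹ : Matrix (Fin m) (Fin m) K) *
            (↑b : Matrix (Fin m) (Fin m) K) * (↑Q : Matrix (Fin m) (Fin m) K) := by
      simp only [Units.val_mul]
    rw [h1, hE, mul_add, add_mul]
    congr 1
    · calc (↑Q⁻¹ : Matrix (Fin m) (Fin m) K) * ↑a⁻¹ * ↑a * ↑Q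
          = ↑Q⁻¹ * (↑a⁻¹ * ↑a) * ↑Q := by rw [mul_assoc ((↑Q⁻¹ : Matrix (Fin m) (Fin m) K))]
        _ = (1 : Matrix (Fin m) (Fin m) K) := by rw [Units.inv_mul, mul_one, Units.inv_mul]
    · simp only [Matrix.mul_smul, Matrix.smul_mul, smul_smul, mul_assoc]
  intro i j
  rw [hval, Matrix.add_apply]
  exact add_mem (aux_one_mem i j)
    (aux_entries_mul hA (aux_entries_mul hainv (aux_entries_mul hEmem hB)) i j)

set_option synthInstance.maxHeartbeats 1000000 in
lemma aux_key (J : Matrix (Fin m) (Fin m) K) (Q : GL (Fin m) K) (hQ : Q ∈ OJK J) :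
    ((OJR J).map (MulAut.conj Q).toMonoidHom).relIndex (OJR J) ≠ 0 := by
  classical
  set S : Subring K := (algebraMap (𝓞 K) K).range with hS
  obtain ⟨d, hd⟩ := IsLocalization.exist_integer_multiples_of_finite
    (nonZeroDivisors (𝓞 K)) (S := K)
    (fun p : Fin m × Fin m × Bool =>
      if p.2.2 then (↑Q : Matrix (Fin m) (Fin m) K) p.1 p.2.1
      else (↑Q⁻¹ : Matrix (Fin m) (Fin m) K) p.1 p.2.1)
  set c : K := algebraMap (𝓞 K) K d with hc
  have hB : ∀ i j, (c • (↑Q : Matrix (Fin m) (Fin m) K)) i j ∈ S := by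
    intro i j
    obtain ⟨r, hr⟩ := hd (i, j, true)
    refine ⟨r, ?_⟩
    simpa [Algebra.smul_def] using hr
  have hA : ∀ i j, (c • (↑Q⁻¹ : Matrix (Fin m) (Fin m) K)) i j ∈ S := by
    intro i j
    obtain ⟨r, hr⟩ := hd (i, j, false)
    refine ⟨r, ?_⟩
    simpa [Algebra.smul_def] using hr
  have hd0 : (d : 𝓞 K) ≠ 0 := nonZeroDivisors.coe_ne_zero d
  set I : Ideal (𝓞 K) := Ideal.span {(d : 𝓞 K) * d} with hI
  have hIbot : I ≠ ⊥ := by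
    simp only [hI, Ne, Ideal.span_singleton_eq_bot]
    exact mul_ne_zero hd0 hd0
  haveI : Fintype ((𝓞 K) ⧸ I) := @Fintype.ofFinite _ (Ideal.finiteQuotientOfFreeOfNeBot I hIbot)
  set Γ := OJR J with hΓ
  have ent : ∀ g : ↥Γ, ∀ i j, ∃ r : 𝓞 K,
      algebraMap (𝓞 K) K r = (↑(↑g : GL (Fin m) K) : Matrix (Fin m) (Fin m) K) i j := by
    intro g i j
    obtain ⟨-, h2, -⟩ := g.2
    exact h2 i j
  set F : ↥Γ → Matrix (Fin m) (Fin m) ((𝓞 K) ⧸ I) :=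
    fun g => Matrix.of fun i j => Ideal.Quotient.mk I (ent g i j).choose with hF
  have main : ∀ x y : ↥Γ, F x = F y →
      (↑x : GL (Fin m) K)⁻¹ * ↑y ∈ Γ.map (MulAut.conj Q).toMonoidHom := by
    intro x y hxy
    have hEex : ∀ i j, ∃ t : 𝓞 K,
        (↑(↑y : GL (Fin m) K) : Matrix (Fin m) (Fin m) K) i j
          = (↑(↑x : GL (Fin m) K) : Matrix (Fin m) (Fin m) K) i j
            + (c * c) * algebraMap (𝓞 K) K t := by
      intro i j
      have h1 : Ideal.Quotient.mk I (ent y i j).choose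
          = Ideal.Quotient.mk I (ent x i j).choose :=
        (congrFun (congrFun hxy i) j).symm
      have h2 : (ent y i j).choose - (ent x i j).choose ∈ I := by
        rwa [Ideal.Quotient.eq] at h1
      obtain ⟨t, ht⟩ := Ideal.mem_span_singleton.mp h2
      refine ⟨t, ?_⟩
      have := congrArg (algebraMap (𝓞 K) K) ht
      rw [_root_.map_sub, _root_.map_mul, _root_.map_mul, (ent y i j).choose_spec, (ent x i j).choose_spec] at this
      rw [← hc] at this
      linear_combination this
    choose t ht using hEex
    set E : Matrix (Fin m) (Fin m) K := Matrix.of fun i j => algebraMap (𝓞 K) K (t i j) with hEdef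
    have hEmem : ∀ i j, E i j ∈ S := fun i j => ⟨t i j, rfl⟩
    have hE : (↑(↑y : GL (Fin m) K) : Matrix (Fin m) (Fin m) K)
        = ↑(↑x : GL (Fin m) K) + (c * c) • E := by
      ext i j
      simp only [Matrix.add_apply, Matrix.smul_apply, smul_eq_mul, hEdef, Matrix.of_apply]
      exact ht i j
    have hEneg : (↑(↑x : GL (Fin m) K) : Matrix (Fin m) (Fin m) K)
        = ↑(↑y : GL (Fin m) K) + (c * c) • (-E) := by
      rw [hE, smul_neg]; abel
    obtain ⟨hx1, hx2, hx3⟩ := x.2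
    obtain ⟨hy1, hy2, hy3⟩ := y.2
    rw [aux_mem_map_conj]
    refine ⟨(OJK J).mul_mem ((OJK J).mul_mem ((OJK J).inv_mem hQ)
        ((OJK J).mul_mem ((OJK J).inv_mem hx1) hy1)) hQ, ?_, ?_⟩
    · intro i j
      have e : Q⁻¹ * ((↑x : GL (Fin m) K)⁻¹ * ↑y) * Q
          = Q⁻¹ * (↑x : GL (Fin m) K)⁻¹ * ↑y * Q := by group
      rw [e]
      exact aux_conj_int hA hB hx3 hEmem hE i j
    · intro i j
      have e : (Q⁻¹ * ((↑x : GL (Fin m) K)⁻¹ * ↑y) * Q)⁻¹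
          = Q⁻¹ * (↑y : GL (Fin m) K)⁻¹ * ↑x * Q := by group
      rw [e]
      exact aux_conj_int hA hB hy3 (fun i j => neg_mem (hEmem i j)) hEneg i j
  haveI : Finite (↥Γ ⧸ (Γ.map (MulAut.conj Q).toMonoidHom).subgroupOf Γ) := by
    apply Finite.of_injective (fun q : ↥Γ ⧸ (Γ.map (MulAut.conj Q).toMonoidHom).subgroupOf Γ =>
      F q.out)
    intro q q' h
    have hmem : (q.out)⁻¹ * q'.out ∈ (Γ.map (MulAut.conj Q).toMonoidHom).subgroupOf Γ := by
      rw [Subgroup.mem_subgroupOf]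
      simpa using main q.out q'.out h
    calc q = QuotientGroup.mk q.out := (QuotientGroup.out_eq' q).symm
      _ = QuotientGroup.mk q'.out := (QuotientGroup.eq).mpr hmem
      _ = q' := QuotientGroup.out_eq' q'
  exact Subgroup.index_ne_zero_of_finite

theorem stmt_9 (hm : 1 ≤ m) (J : Matrix (Fin m) (Fin m) K)
    (P : GL (Fin m) K) (hP : P ∈ OJK J) :
    Subgroup.Commensurable (OJR J) ((OJR J).map (MulAut.conj P⁻¹).toMonoidHom) := by
  have h1 := aux_key J P hP
  have h2 := aux_key J P⁻¹ ((OJK J).inv_mem hP)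
  rw [aux_map_eq_smul] at h1 h2 ⊢
  have hginv : ConjAct.toConjAct P⁻¹ = (ConjAct.toConjAct P)⁻¹ := map_inv _ _
  rw [hginv] at h2 ⊢
  refine ⟨?_, h2⟩
  have e := Subgroup.quotConjEquiv (OJR J) ((ConjAct.toConjAct P)⁻¹ • (OJR J))
    (ConjAct.toConjAct P)
  rw [smul_inv_smul] at e
  have hcard : (OJR J).relIndex ((ConjAct.toConjAct P)⁻¹ • (OJR J))
      = (ConjAct.toConjAct P • (OJR J)).relIndex (OJR J) := by
    show ((OJR J).subgroupOf ((ConjAct.toConjAct P)⁻¹ • (OJR J))).index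
      = ((ConjAct.toConjAct P • (OJR J)).subgroupOf (OJR J)).index
    rw [Subgroup.index_eq_card, Subgroup.index_eq_card]
    exact Nat.card_congr e
  rw [hcard]
  exact h1
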